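/- Let ϱ = e^{2πi/3}. Then Σ over integers m,n ≥ 1 of ϱ^{2m+n}/(m²·n²·(m+n)²) = (53/229635)·π⁶. -/

import Mathlib

open Complex intervalIntegral

noncomputable section ZetaSU3Aux

namespace ZetaSU3

local notation "π" => Real.pi

/-! ### Bernoulli polynomial B₂ facts -/

lemma bern2 (x : ℝ) : bernoulliFun 2 x = x^2 - x + 1/6 := by
  simp [bernoulliFun, Polynomial.bernoulli, Finset.sum_range_succ, bernoulli]
  ring

lemma bern2_cont : Continuous (fun x : ℝ => bernoulliFun 2 x) := by
  simp only [bern2]; continuity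

/-- ∫₀¹ 2π² B₂(x) e^{2πi s x} dx = 1/s²  (also holds at s = 0 with junk value `1/0 = 0`). -/
lemma key_integral (s : ℤ) :
    (∫ x in (0:ℝ)..1, (2 * (π:ℂ)^2 * (bernoulliFun 2 x : ℝ)) *
      Complex.exp (2 * π * Complex.I * s * x)) = 1 / (s:ℂ)^2 := by
  rcases eq_or_ne s 0 with rfl | hs
  · simp only [Int.cast_zero, mul_zero, zero_mul, Complex.exp_zero, mul_one]
    rw [show ((0:ℂ)^2) = 0 by norm_num, div_zero,
      intervalIntegral.integral_const_mul, intervalIntegral.integral_ofReal,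
      integral_bernoulliFun_eq_zero two_ne_zero]
    simp
  · obtain ⟨c, hc⟩ : ∃ c:ℂ, c = 2 * π * Complex.I * s := ⟨_, rfl⟩
    obtain ⟨d, hd⟩ : ∃ d:ℂ, d = c⁻¹ := ⟨_, rfl⟩
    have hs' : (s:ℂ) ≠ 0 := by exact_mod_cast hs
    have hpi : ((π:ℝ):ℂ) ≠ 0 := by exact_mod_cast Real.pi_ne_zero
    have hc0 : c ≠ 0 := by
      simp only [hc]
      exact mul_ne_zero (mul_ne_zero (mul_ne_zero two_ne_zero hpi) I_ne_zero) hs'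
    have hcd : c * d = 1 := by rw [hd, mul_inv_cancel₀ hc0]
    set H : ℝ → ℂ := fun x => ((x:ℂ)^2 - x + 1/6)*d - (2*(x:ℂ) - 1)*d^2 + 2*d^3 with hHdef
    set F : ℝ → ℂ := fun x => (2 * (π:ℂ)^2) * (Complex.exp (c * x) * H x) with hF
    have hder : ∀ x ∈ Set.uIcc (0:ℝ) 1, HasDerivAt F
        ((2 * (π:ℂ)^2 * (bernoulliFun 2 x : ℝ)) *
          Complex.exp (2 * π * Complex.I * s * x)) x := by
      intro x _
      have hx : HasDerivAt (fun x : ℝ => (x:ℂ)) 1 x := ofRealCLM.hasDerivAt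
      have h1 : HasDerivAt (fun x : ℝ => Complex.exp (c * x)) (Complex.exp (c * x) * c) x := by
        have hz : HasDerivAt (fun z : ℂ => Complex.exp (c * z))
            (Complex.exp (c * (x:ℂ)) * c) (x:ℂ) := by
          have := ((hasDerivAt_id ((x:ℂ))).const_mul c).cexp
          simpa using this
        exact hz.comp_ofReal
      have hsq : HasDerivAt (fun x : ℝ => (x:ℂ)^2) (2*(x:ℂ)) x := by
        have := (hasDerivAt_pow 2 (x:ℂ)).comp_ofReal
        simpa using this
      have h2 : HasDerivAt H ((2*(x:ℂ) - 1)*d - 2*d^2) x := by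
        have h := ((((hsq.sub hx).add_const ((1:ℂ)/6)).mul_const d).sub
          (((hx.const_mul (2:ℂ)).sub_const (1:ℂ)).mul_const (d^2))).add_const (2*d^3)
        exact h.congr_deriv (by ring)
      have hGH := (h1.mul h2).const_mul (2 * (π:ℂ)^2)
      have key : c * H x + ((2*(x:ℂ) - 1)*d - 2*d^2) = (x:ℂ)^2 - x + 1/6 := by
        simp only [hHdef]
        linear_combination (((x:ℂ)^2 - x + 1/6) - (2*(x:ℂ)-1)*d + 2*d^2) * hcd
      refine hGH.congr_deriv (Eq.symm ?_)
      rw [bern2]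
      have hexp : Complex.exp (2 * π * Complex.I * s * x) = Complex.exp (c * x) := by
        rw [hc]
      push_cast
      rw [hexp]
      linear_combination (-(2 * (π:ℂ)^2) * Complex.exp (c*(x:ℂ))) * key
    have hcont : IntervalIntegrable (fun x : ℝ => (2 * (π:ℂ)^2 * (bernoulliFun 2 x : ℝ)) *
        Complex.exp (2 * π * Complex.I * s * x)) MeasureTheory.volume 0 1 := by
      apply Continuous.intervalIntegrable
      exact (continuous_const.mul (continuous_ofReal.comp bern2_cont)).mul
        (Complex.continuous_exp.comp (by continuity))
    rw [intervalIntegral.integral_eq_sub_of_hasDerivAt hder hcont]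
    have he : Complex.exp (c * 1) = 1 := by
      rw [mul_one, hc, show (2:ℂ) * π * Complex.I * s = s * (2*π*Complex.I) by ring,
        Complex.exp_int_mul_two_pi_mul_I]
    have hH10 : H (1:ℝ) - H 0 = -(2*d^2) := by
      simp only [hHdef]; push_cast; ring
    have hc2 : c^2 = -(4 * (π:ℂ)^2 * (s:ℂ)^2) := by
      have hI : Complex.I^2 = -1 := Complex.I_sq
      rw [hc]
      linear_combination (4*(π:ℂ)^2*(s:ℂ)^2) * hI
    have hfin : F 1 - F 0 = -(4*(π:ℂ)^2)*d^2 := by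
      simp only [hF, he, Complex.ofReal_one, Complex.ofReal_zero, mul_zero,
        Complex.exp_zero, one_mul]
      linear_combination (2*(π:ℂ)^2) * hH10
    rw [hfin, hd, inv_pow, hc2]
    rw [show (-(4 * (π:ℂ)^2 * (s:ℂ)^2))⁻¹ = -(4 * (π:ℂ)^2 * (s:ℂ)^2)⁻¹ by rw [inv_neg]]
    rw [eq_div_iff (pow_ne_zero 2 hs')]
    field_simp

/-! ### The cube root of unity W -/

def W : ℂ := Complex.exp (2 * π * Complex.I / 3)

lemma W_ne : W ≠ 0 := Complex.exp_ne_zero _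

lemma W_cube : W ^ (3:ℕ) = 1 := by
  rw [W, ← Complex.exp_nat_mul]
  rw [show ((3:ℕ):ℂ) * (2 * (π:ℂ) * Complex.I / 3) = 2 * π * Complex.I by push_cast; ring]
  exact Complex.exp_two_pi_mul_I

lemma W_zpow_congr (b k : ℤ) {a : ℤ} (h : a = b + 3 * k) : W ^ a = W ^ b := by
  rw [h, zpow_add₀ W_ne, zpow_mul, show ((3:ℤ)) = ((3:ℕ):ℤ) by norm_num,
    zpow_natCast, W_cube, one_zpow, mul_one]

lemma abs_W : ‖W‖ = 1 := by
  rw [W, show (2 * (π:ℂ) * Complex.I / 3) = ((2*π/3 : ℝ):ℂ) * Complex.I by push_cast; ring,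
    Complex.norm_exp_ofReal_mul_I]

lemma norm_W_zpow (e : ℤ) : ‖W ^ e‖ = 1 := by
  rw [norm_zpow, abs_W, one_zpow]

/-! ### The lattice summand and the six embeddings -/

/-- summand of the full lattice sum -/
def tt (q : ℤ × ℤ) : ℂ :=
  W ^ (2*q.1 + q.2) / ((q.1:ℂ)^2 * (q.2:ℂ)^2 * ((q.1:ℂ) + q.2)^2)

def emb : Fin 6 → ℤ → ℤ → ℤ × ℤ
  | 0, A, B => (A, B)
  | 1, A, B => (-B, -A)
  | 2, A, B => (A+B, -B)
  | 3, A, B => (B, -(A+B))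
  | 4, A, B => (-A, A+B)
  | 5, A, B => (-(A+B), A)

lemma tt_emb (i : Fin 6) (A B : ℤ) :
    tt (emb i A B) = W ^ (2*A + B) / ((A:ℂ)^2 * (B:ℂ)^2 * ((A:ℂ) + B)^2) := by
  fin_cases i
  · rfl
  · show W ^ (2*(-B) + -A) / (((-B:ℤ):ℂ)^2 * ((-A:ℤ):ℂ)^2 * (((-B:ℤ):ℂ) + ((-A:ℤ):ℂ))^2) = _
    rw [W_zpow_congr (2*A+B) (-(A+B)) (by ring)]
    push_cast; ring_nf
  · show W ^ (2*(A+B) + -B) / ((((A+B:ℤ)):ℂ)^2 * ((-B:ℤ):ℂ)^2 * ((((A+B):ℤ):ℂ) + ((-B:ℤ):ℂ))^2) = _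
    rw [W_zpow_congr (2*A+B) 0 (by ring)]
    push_cast; ring_nf
  · show W ^ (2*B + -(A+B)) / (((B:ℤ):ℂ)^2 * ((-(A+B):ℤ):ℂ)^2 * (((B:ℤ):ℂ) + ((-(A+B):ℤ):ℂ))^2) = _
    rw [W_zpow_congr (2*A+B) (-A) (by ring)]
    push_cast; ring_nf
  · show W ^ (2*(-A) + (A+B)) / (((-A:ℤ):ℂ)^2 * (((A+B):ℤ):ℂ)^2 * (((-A:ℤ):ℂ) + (((A+B):ℤ):ℂ))^2) = _
    rw [W_zpow_congr (2*A+B) (-A) (by ring)]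
    push_cast; ring_nf
  · show W ^ (2*(-(A+B)) + A) / (((-(A+B):ℤ):ℂ)^2 * ((A:ℤ):ℂ)^2 * (((-(A+B):ℤ):ℂ) + ((A:ℤ):ℂ))^2) = _
    rw [W_zpow_congr (2*A+B) (-(A+B)) (by ring)]
    push_cast; ring_nf

def jmap (x : Fin 6 × ℕ × ℕ) : ℤ × ℤ := emb x.1 ((x.2.1:ℤ)+1) ((x.2.2:ℤ)+1)

set_option maxHeartbeats 3000000 in
lemma jmap_inj : Function.Injective jmap := by
  rintro ⟨i, a, b⟩ ⟨i', a', b'⟩ h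
  simp only [jmap] at h
  fin_cases i <;> fin_cases i' <;>
    simp only [emb, Prod.mk.injEq] at h <;>
    first
      | (exfalso; omega)
      | (simp only [Prod.mk.injEq, true_and]; omega)

lemma tt_zero_of_bad {q : ℤ × ℤ} (h : q.1 = 0 ∨ q.2 = 0 ∨ q.1 + q.2 = 0) : tt q = 0 := by
  rcases h with h | h | h
  · simp [tt, h]
  · simp [tt, h]
  · have : ((q.1:ℂ) + q.2) = 0 := by exact_mod_cast congrArg (fun z : ℤ => (z:ℂ)) h
    simp [tt, this]

lemma support_tt_sub : Function.support tt ⊆ Set.range jmap := by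
  intro q hq
  by_contra hnot
  apply hq
  have h1 : q.1 ≠ 0 := by
    intro h; exact hq (tt_zero_of_bad (Or.inl h))
  have h2 : q.2 ≠ 0 := by
    intro h; exact hq (tt_zero_of_bad (Or.inr (Or.inl h)))
  have h3 : q.1 + q.2 ≠ 0 := by
    intro h; exact hq (tt_zero_of_bad (Or.inr (Or.inr h)))
  exfalso
  apply hnot
  rcases lt_or_gt_of_ne h1 with hm | hm <;> rcases lt_or_gt_of_ne h2 with hn | hn
  · -- m<0, n<0 : region 1 : (-B,-A) = (m,n), A = -n, B = -m
    exact ⟨⟨1, (-q.2-1).toNat, (-q.1-1).toNat⟩, by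
      simp only [jmap, emb, Prod.ext_iff]; constructor <;> [skip; skip] <;> omega⟩
  · -- m<0, n>0
    rcases lt_or_gt_of_ne h3 with hs | hs
    · -- m+n<0 : region 5 : (-(A+B), A) = (m,n), A = n, B = -m-n
      exact ⟨⟨5, (q.2-1).toNat, (-q.1-q.2-1).toNat⟩, by
        simp only [jmap, emb, Prod.ext_iff]; constructor <;> omega⟩
    · -- m+n>0 : region 4 : (-A, A+B) = (m,n), A = -m, B = m+n
      exact ⟨⟨4, (-q.1-1).toNat, (q.1+q.2-1).toNat⟩, by
        simp only [jmap, emb, Prod.ext_iff]; constructor <;> omega⟩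
  · -- m>0, n<0
    rcases lt_or_gt_of_ne h3 with hs | hs
    · -- m+n<0 : region 3 : (B, -(A+B)) = (m,n), B = m, A = -m-n
      exact ⟨⟨3, (-q.1-q.2-1).toNat, (q.1-1).toNat⟩, by
        simp only [jmap, emb, Prod.ext_iff]; constructor <;> omega⟩
    · -- m+n>0 : region 2 : (A+B, -B) = (m,n), B = -n, A = m+n
      exact ⟨⟨2, (q.1+q.2-1).toNat, (-q.2-1).toNat⟩, by
        simp only [jmap, emb, Prod.ext_iff]; constructor <;> omega⟩
  · -- m>0, n>0 : region 0
    exact ⟨⟨0, (q.1-1).toNat, (q.2-1).toNat⟩, by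
      simp only [jmap, emb, Prod.ext_iff]; constructor <;> omega⟩

/-! ### Summability -/

lemma majorant_summable :
    Summable (fun q : ℤ × ℤ => (1/(q.1:ℝ)^2) * (1/(q.2:ℝ)^2)) := by
  have h : Summable (fun n : ℤ => 1/(n:ℝ)^2) :=
    (Real.summable_one_div_int_pow (p := 2)).2 one_lt_two
  have key := h.mul_of_nonneg h (g := fun n : ℤ => 1/(n:ℝ)^2) ?_ ?_
  · exact key
  · intro n; positivity
  · intro n; positivity

lemma norm_tt_le (q : ℤ × ℤ) : ‖tt q‖ ≤ (1/(q.1:ℝ)^2) * (1/(q.2:ℝ)^2) := by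
  rcases eq_or_ne q.1 0 with h | h1
  · rw [tt_zero_of_bad (Or.inl h)]; simp; positivity
  rcases eq_or_ne q.2 0 with h | h2
  · rw [tt_zero_of_bad (Or.inr (Or.inl h))]; simp; positivity
  rcases eq_or_ne (q.1 + q.2) 0 with h | h3
  · rw [tt_zero_of_bad (Or.inr (Or.inr h))]; simp; positivity
  · have e1 : ‖tt q‖ = 1 / ((q.1:ℝ)^2 * (q.2:ℝ)^2 * ((q.1:ℝ)+(q.2:ℝ))^2) := by
      rw [tt, norm_div, norm_W_zpow]
      congr 1
      have : ((q.1:ℂ)^2 * (q.2:ℂ)^2 * ((q.1:ℂ) + q.2)^2)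
          = ((((q.1:ℝ)^2 * (q.2:ℝ)^2 * ((q.1:ℝ)+(q.2:ℝ))^2 : ℝ)):ℂ) := by push_cast; ring
      rw [this, Complex.norm_real, Real.norm_eq_abs, _root_.abs_of_nonneg (by positivity)]
    rw [e1]
    have hq1 : (1:ℝ) ≤ ((q.1:ℝ)+(q.2:ℝ))^2 := by
      have h : ((q.1+q.2:ℤ):ℝ) = (q.1:ℝ)+(q.2:ℝ) := by push_cast; ring
      rw [← h]
      norm_cast
      rcases lt_or_gt_of_ne h3 with hlt | hlt <;> nlinarith
    have hq1' : (q.1:ℝ) ≠ 0 := Int.cast_ne_zero.2 h1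
    have hq2' : (q.2:ℝ) ≠ 0 := Int.cast_ne_zero.2 h2
    have hX : (0:ℝ) < (q.1:ℝ)^2 := by positivity
    have hY : (0:ℝ) < (q.2:ℝ)^2 := by positivity
    rw [one_div_mul_one_div]
    apply one_div_le_one_div_of_le (by positivity)
    have hmul := mul_le_mul_of_nonneg_left hq1 (mul_pos hX hY).le
    rw [mul_one] at hmul
    exact hmul

lemma summable_tt : Summable tt :=
  Summable.of_norm_bounded majorant_summable norm_tt_le

/-- the original summand -/
def sOrig (p : ℕ × ℕ) : ℂ :=
  Complex.exp (2 * π * Complex.I / 3) ^ (2 * (p.1 + 1) + (p.2 + 1))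
    / (((p.1 : ℂ) + 1) ^ 2 * ((p.2 : ℂ) + 1) ^ 2 * ((p.1 : ℂ) + (p.2 : ℂ) + 2) ^ 2)

lemma sOrig_eq_tt (i : Fin 6) (p : ℕ × ℕ) : tt (jmap (i, p)) = sOrig p := by
  show tt (emb i ((p.1:ℤ)+1) ((p.2:ℤ)+1)) = _
  rw [tt_emb, sOrig]
  rw [show Complex.exp (2 * π * Complex.I / 3) ^ (2 * (p.1 + 1) + (p.2 + 1))
      = W ^ ((2 * (p.1 + 1) + (p.2 + 1) : ℕ) : ℤ) by rw [zpow_natCast]; rfl]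
  rw [show ((2 * (p.1 + 1) + (p.2 + 1) : ℕ) : ℤ) = 2*((p.1:ℤ)+1) + ((p.2:ℤ)+1) by push_cast; ring]
  push_cast
  ring_nf

lemma lattice_eq : ∑' q : ℤ × ℤ, tt q = 6 * ∑' p : ℕ × ℕ, sOrig p := by
  rw [← jmap_inj.tsum_eq support_tt_sub]
  have hs : Summable (tt ∘ jmap) := summable_tt.comp_injective jmap_inj
  have h1 : ∑' x : Fin 6 × ℕ × ℕ, tt (jmap x)
      = ∑' (i : Fin 6), ∑' (p : ℕ × ℕ), tt (jmap (i, p)) := by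
    exact hs.tsum_prod' (fun i => hs.comp_injective (fun p p' h => by
      simpa using congrArg Prod.snd h))
  rw [h1]
  have h2 : ∀ i : Fin 6, ∑' (p : ℕ × ℕ), tt (jmap (i, p)) = ∑' p : ℕ × ℕ, sOrig p :=
    fun i => tsum_congr (fun p => sOrig_eq_tt i p)
  rw [tsum_congr h2, tsum_fintype]
  simp [Finset.sum_const, Finset.card_univ]
  try ring

/-! ### Periodized Bernoulli -/

def pb2 : ℝ → ℝ := fun x => periodizedBernoulli 2 (x : UnitAddCircle)

lemma pb2_cont : Continuous pb2 :=
  (periodizedBernoulli.continuous (by norm_num)).comp (AddCircle.continuous_mk' 1)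

lemma coe_fract (y : ℝ) : ((Int.fract y : ℝ) : UnitAddCircle) = (y : UnitAddCircle) := by
  rw [Int.fract, AddCircle.coe_sub]
  have : (((⌊y⌋:ℝ)) : UnitAddCircle) = 0 := by
    rw [show ((⌊y⌋:ℝ)) = ⌊y⌋ • (1:ℝ) by rw [zsmul_eq_mul, mul_one],
      AddCircle.coe_zsmul, AddCircle.coe_period, smul_zero]
  rw [this, sub_zero]

lemma pb2_apply (y : ℝ) : pb2 y = bernoulliFun 2 (Int.fract y) := by
  rw [pb2, ← coe_fract, periodizedBernoulli]
  exact AddCircle.liftIco_coe_apply (by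
    rw [zero_add]; exact ⟨Int.fract_nonneg y, Int.fract_lt_one y⟩)

/-! ### Fourier expansion -/

lemma hasSum_B2 (y : ℝ) :
    HasSum (fun m : ℤ => Complex.exp (2*π*Complex.I*m*(y:ℝ)) / (m:ℂ)^2)
      ((2*(π:ℂ)^2) * ((pb2 y : ℝ) : ℂ)) := by
  have h0 := hasSum_one_div_pow_mul_fourier_mul_bernoulliFun (k := 2) le_rfl
    (x := Int.fract y) ⟨Int.fract_nonneg y, (Int.fract_lt_one y).le⟩
  have hterm : ∀ m : ℤ, (1/(m:ℂ)^2 * fourier m ((Int.fract y : ℝ) : UnitAddCircle))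
      = Complex.exp (2*π*Complex.I*m*(y:ℝ)) / (m:ℂ)^2 := by
    intro m
    rw [fourier_coe_apply]
    have harg : (2*(π:ℂ)*Complex.I*m*((Int.fract y : ℝ):ℂ) / ((1:ℝ):ℂ))
        = 2*π*Complex.I*m*((y:ℝ):ℂ) - ((m*⌊y⌋ : ℤ):ℂ)*(2*π*Complex.I) := by
      rw [Int.fract]
      push_cast
      ring
    rw [harg, Complex.exp_sub, Complex.exp_int_mul_two_pi_mul_I, div_one, mul_comm,
      mul_one_div]
  have hconst : (-(2 * (π:ℂ) * Complex.I)^2 / ((Nat.factorial 2 : ℕ) : ℂ)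
      * ((bernoulliFun 2 (Int.fract y) : ℝ):ℂ)) = (2*(π:ℂ)^2) * ((pb2 y : ℝ) : ℂ) := by
    rw [pb2_apply]
    have hI : Complex.I^2 = -1 := Complex.I_sq
    rw [show (((Nat.factorial 2 : ℕ)):ℂ) = 2 by norm_num [Nat.factorial]]
    linear_combination (-2*(π:ℂ)^2 * ((bernoulliFun 2 (Int.fract y) : ℝ):ℂ)) * hI
  rw [← hconst]
  exact h0.congr_fun (fun m => (hterm m).symm)

/-! ### Integral representation and Fubini -/

def KK (q : ℤ × ℤ) (x : ℝ) : ℂ :=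
  (W ^ (2*q.1+q.2) / ((q.1:ℂ)^2 * (q.2:ℂ)^2)) *
    ((2 * (π:ℂ)^2 * ((bernoulliFun 2 x : ℝ) : ℂ)) *
      Complex.exp (2 * π * Complex.I * ((q.1+q.2 : ℤ):ℂ) * (x:ℝ)))

lemma tt_eq_integral (q : ℤ × ℤ) : tt q = ∫ x in (0:ℝ)..1, KK q x := by
  simp only [KK]
  rw [intervalIntegral.integral_const_mul, key_integral (q.1+q.2)]
  simp only [tt]
  push_cast
  simp only [div_eq_mul_inv, mul_inv]
  ring

lemma norm_exp_unit (r : ℝ) : ‖Complex.exp (((r:ℝ):ℂ) * Complex.I)‖ = 1 := by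
  rw [Complex.norm_exp_ofReal_mul_I]

lemma KK_cont (q : ℤ × ℤ) : Continuous (KK q) := by
  apply Continuous.mul continuous_const
  apply Continuous.mul
  · exact continuous_const.mul (Complex.continuous_ofReal.comp bern2_cont)
  · exact Complex.continuous_exp.comp (by continuity)

lemma norm_KK_le (q : ℤ × ℤ) (x : ℝ) (hx : x ∈ Set.Ioc (0:ℝ) 1) :
    ‖KK q x‖ ≤ (2*Real.pi^2) * ((1/(q.1:ℝ)^2) * (1/(q.2:ℝ)^2)) := by
  have hB : |bernoulliFun 2 x| ≤ 1 := by
    rw [bern2, abs_le]; constructor <;> nlinarith [hx.1, hx.2]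
  rw [KK, norm_mul, norm_mul, norm_div, norm_W_zpow]
  have h1 : ‖((q.1:ℂ)^2 * (q.2:ℂ)^2)‖ = (q.1:ℝ)^2*(q.2:ℝ)^2 := by
    rw [show ((q.1:ℂ)^2*(q.2:ℂ)^2) = ((((q.1:ℝ)^2*(q.2:ℝ)^2 : ℝ)):ℂ) by push_cast; ring,
      Complex.norm_real, Real.norm_eq_abs, _root_.abs_of_nonneg (by positivity)]
  have h2 : ‖Complex.exp (2*(π:ℂ)*Complex.I*((q.1+q.2:ℤ):ℂ)*(x:ℝ))‖ = 1 := by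
    rw [show (2*(π:ℂ)*Complex.I*((q.1+q.2:ℤ):ℂ)*(x:ℝ))
        = (((2*π*((q.1+q.2:ℤ)):ℝ)*x : ℝ):ℂ)*Complex.I by push_cast; ring]
    exact norm_exp_unit _
  have h3 : ‖(2*(π:ℂ)^2 * ((bernoulliFun 2 x : ℝ):ℂ))‖ = 2*Real.pi^2*|bernoulliFun 2 x| := by
    rw [show (2*(π:ℂ)^2 * ((bernoulliFun 2 x:ℝ):ℂ))
        = (((2*Real.pi^2*bernoulliFun 2 x : ℝ)):ℂ) by push_cast; ring,
      Complex.norm_real, Real.norm_eq_abs, abs_mul, _root_.abs_of_nonneg (by positivity)]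
  rw [h1, h2, h3, mul_one]
  have hpos : (0:ℝ) ≤ 1/((q.1:ℝ)^2*(q.2:ℝ)^2) := by positivity
  calc 1/((q.1:ℝ)^2*(q.2:ℝ)^2) * (2*Real.pi^2*|bernoulliFun 2 x|)
      ≤ 1/((q.1:ℝ)^2*(q.2:ℝ)^2) * (2*Real.pi^2*1) := by
        apply mul_le_mul_of_nonneg_left _ hpos
        nlinarith [Real.pi_pos]
    _ = 2*Real.pi^2 * ((1/(q.1:ℝ)^2)*(1/(q.2:ℝ)^2)) := by
        rw [one_div_mul_one_div]; ring

lemma tsum_tt_eq : ∑' q : ℤ × ℤ, tt q = ∫ x in Set.Ioc (0:ℝ) 1, ∑' q : ℤ × ℤ, KK q x := by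
  have h1 : ∀ q : ℤ × ℤ, tt q = ∫ x in Set.Ioc (0:ℝ) 1, KK q x := by
    intro q; rw [tt_eq_integral q, intervalIntegral.integral_of_le zero_le_one]
  rw [tsum_congr h1]
  refine (MeasureTheory.integral_tsum
    (fun q => (KK_cont q).aestronglyMeasurable) ?_).symm
  have hb : ∀ q : ℤ × ℤ, (∫⁻ x, ‖KK q x‖₊ ∂(MeasureTheory.volume.restrict (Set.Ioc (0:ℝ) 1)))
      ≤ ENNReal.ofReal ((2*Real.pi^2) * ((1/(q.1:ℝ)^2) * (1/(q.2:ℝ)^2))) := by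
    intro q
    have hae : ∀ᵐ x ∂(MeasureTheory.volume.restrict (Set.Ioc (0:ℝ) 1)),
        (‖KK q x‖₊ : ENNReal)
          ≤ ENNReal.ofReal ((2*Real.pi^2) * ((1/(q.1:ℝ)^2) * (1/(q.2:ℝ)^2))) := by
      refine (MeasureTheory.ae_restrict_iff' measurableSet_Ioc).mpr
        (MeasureTheory.ae_of_all _ ?_)
      intro x hx
      rw [show ((‖KK q x‖₊ : ENNReal)) = ENNReal.ofReal ‖KK q x‖ from (ofReal_norm_eq_enorm _).symm]
      exact ENNReal.ofReal_le_ofReal (norm_KK_le q x hx)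
    calc (∫⁻ x, ‖KK q x‖₊ ∂(MeasureTheory.volume.restrict (Set.Ioc (0:ℝ) 1)))
        ≤ ∫⁻ _x, ENNReal.ofReal ((2*Real.pi^2) * ((1/(q.1:ℝ)^2) * (1/(q.2:ℝ)^2)))
            ∂(MeasureTheory.volume.restrict (Set.Ioc (0:ℝ) 1)) :=
          MeasureTheory.lintegral_mono_ae hae
      _ = ENNReal.ofReal ((2*Real.pi^2) * ((1/(q.1:ℝ)^2) * (1/(q.2:ℝ)^2))) := by
          rw [MeasureTheory.lintegral_const, MeasureTheory.Measure.restrict_apply_univ,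
            Real.volume_Ioc]
          norm_num
  refine ne_top_of_le_ne_top ?_ (ENNReal.tsum_le_tsum hb)
  rw [← ENNReal.ofReal_tsum_of_nonneg (fun q => by positivity)
    (majorant_summable.mul_left _)]
  exact ENNReal.ofReal_ne_top

/-! ### Pointwise evaluation of the sum -/

lemma norm_summand (y : ℝ) :
    Summable (fun m : ℤ => ‖Complex.exp (2*π*Complex.I*m*(y:ℝ)) / (m:ℂ)^2‖) := by
  have hnorm : ∀ m : ℤ, ‖Complex.exp (2*π*Complex.I*m*(y:ℝ))/(m:ℂ)^2‖ = 1/(m:ℝ)^2 := by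
    intro m
    rw [norm_div, show (2*(π:ℂ)*Complex.I*m*(y:ℝ)) = (((2*π*m*y : ℝ)):ℂ)*Complex.I by
      push_cast; ring, norm_exp_unit]
    congr 1
    rw [show ((m:ℂ)^2) = (((m:ℝ)^2 : ℝ):ℂ) by push_cast; ring,
      Complex.norm_real, Real.norm_eq_abs, _root_.abs_of_nonneg (by positivity)]
  simp only [hnorm]
  exact (Real.summable_one_div_int_pow (p := 2)).2 one_lt_two

lemma tsum_KK (x : ℝ) :
    ∑' q : ℤ × ℤ, KK q x = (2*(π:ℂ)^2*((bernoulliFun 2 x : ℝ):ℂ)) *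
      ((2*(π:ℂ)^2*((pb2 (x+2/3) : ℝ):ℂ)) * (2*(π:ℂ)^2*((pb2 (x+1/3) : ℝ):ℂ))) := by
  set u : ℤ → ℂ := fun m => Complex.exp (2*π*Complex.I*m*((x+2/3 : ℝ):ℂ)) / (m:ℂ)^2 with hu
  set v : ℤ → ℂ := fun n => Complex.exp (2*π*Complex.I*n*((x+1/3 : ℝ):ℂ)) / (n:ℂ)^2 with hv
  have hKq : ∀ q : ℤ × ℤ, KK q x
      = (2*(π:ℂ)^2*((bernoulliFun 2 x:ℝ):ℂ)) * (u q.1 * v q.2) := by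
    intro q
    have hW : W ^ (2*q.1+q.2) = Complex.exp (((2*q.1+q.2 : ℤ):ℂ) * (2*π*Complex.I/3)) :=
      (Complex.exp_int_mul _ _).symm
    have huv : u q.1 * v q.2 = Complex.exp (((2*q.1+q.2 : ℤ):ℂ) * (2*π*Complex.I/3)
        + 2*π*Complex.I*((q.1+q.2:ℤ):ℂ)*(x:ℝ)) / ((q.1:ℂ)^2*(q.2:ℂ)^2) := by
      simp only [hu, hv]
      rw [div_mul_div_comm, ← Complex.exp_add]
      have harg : (2*(π:ℂ)*Complex.I*(q.1:ℂ)*((x+2/3:ℝ):ℂ) + 2*π*Complex.I*(q.2:ℂ)*((x+1/3:ℝ):ℂ))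
          = ((2*q.1+q.2 : ℤ):ℂ) * (2*π*Complex.I/3) + 2*π*Complex.I*((q.1+q.2:ℤ):ℂ)*(x:ℝ) := by
        push_cast; ring
      rw [harg]
    rw [huv]
    simp only [KK, hW, Complex.exp_add]
    ring
  rw [tsum_congr hKq, tsum_mul_left, ← tsum_mul_tsum_of_summable_norm
    (norm_summand (x+2/3)) (norm_summand (x+1/3)),
    (hasSum_B2 (x+2/3)).tsum_eq, (hasSum_B2 (x+1/3)).tsum_eq]

/-! ### Evaluation of the polynomial integral -/

lemma int_poly (a b c0 c1 c2 c3 c4 c5 c6 : ℝ) :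
    ∫ x in a..b, (c0 + c1*x + c2*x^2 + c3*x^3 + c4*x^4 + c5*x^5 + c6*x^6) =
      (c0*b + c1/2*b^2 + c2/3*b^3 + c3/4*b^4 + c4/5*b^5 + c5/6*b^6 + c6/7*b^7)
      - (c0*a + c1/2*a^2 + c2/3*a^3 + c3/4*a^4 + c4/5*a^5 + c5/6*a^6 + c6/7*a^7) := by
  have key : ∀ x ∈ Set.uIcc a b, HasDerivAt (fun x : ℝ =>
      c0*x + c1/2*x^2 + c2/3*x^3 + c3/4*x^4 + c4/5*x^5 + c5/6*x^6 + c6/7*x^7)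
      (c0 + c1*x + c2*x^2 + c3*x^3 + c4*x^4 + c5*x^5 + c6*x^6) x := by
    intro x _
    have H := ((((((((hasDerivAt_id x).const_mul c0).add
      ((hasDerivAt_pow 2 x).const_mul (c1/2))).add
      ((hasDerivAt_pow 3 x).const_mul (c2/3))).add
      ((hasDerivAt_pow 4 x).const_mul (c3/4))).add
      ((hasDerivAt_pow 5 x).const_mul (c4/5))).add
      ((hasDerivAt_pow 6 x).const_mul (c5/6))).add
      ((hasDerivAt_pow 7 x).const_mul (c6/7)))
    exact H.congr_deriv (by push_cast; ring)
  rw [intervalIntegral.integral_eq_sub_of_hasDerivAt key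
    (Continuous.intervalIntegrable (by continuity) _ _)]

/-- the real integrand -/
def ff : ℝ → ℝ := fun x => bernoulliFun 2 x * (pb2 (x+2/3) * pb2 (x+1/3))

lemma ff_cont : Continuous ff :=
  (bern2_cont.mul ((pb2_cont.comp (by continuity)).mul (pb2_cont.comp (by continuity))))

lemma piece1 : ∫ x in (0:ℝ)..(1/3), ff x = 53/918540 := by
  have heq : Set.EqOn ff (fun x : ℝ => (1/1944 : ℝ) + (-1/324)*x + (-11/324)*x^2
      + (2/9)*x^3 + (-1/18)*x^4 + (-1)*x^5 + 1*x^6) (Set.uIcc 0 (1/3)) := by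
    intro x hx
    rw [Set.uIcc_of_le (by norm_num)] at hx
    have h13 : pb2 (x+1/3) = bernoulliFun 2 (x+1/3) := by
      rw [pb2_apply, Int.fract_eq_self.2 ⟨by linarith [hx.1], by linarith [hx.2]⟩]
    rcases lt_or_eq_of_le hx.2 with hlt | hEq
    · have h23 : pb2 (x+2/3) = bernoulliFun 2 (x+2/3) := by
        rw [pb2_apply, Int.fract_eq_self.2 ⟨by linarith [hx.1], by linarith⟩]
      rw [ff, h13, h23, bern2, bern2, bern2]
      ring
    · subst hEq
      have h23 : pb2 ((1:ℝ)/3+2/3) = bernoulliFun 2 0 := by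
        rw [pb2_apply, show (1/3 : ℝ)+2/3 = 0 + ((1:ℤ):ℝ) by norm_num,
          Int.fract_add_intCast, Int.fract_zero]
      rw [ff, h13, h23, bern2, bern2, bern2]
      norm_num
  rw [intervalIntegral.integral_congr heq, int_poly]
  norm_num

lemma piece2 : ∫ x in (1/3:ℝ)..(2/3), ff x = 53/918540 := by
  have heq : Set.EqOn ff (fun x : ℝ => (-11/1944 : ℝ) + (5/324)*x + (85/324)*x^2
      + (-14/9)*x^3 + (59/18)*x^4 + (-3)*x^5 + 1*x^6) (Set.uIcc (1/3) (2/3)) := by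
    intro x hx
    rw [Set.uIcc_of_le (by norm_num)] at hx
    have h23 : pb2 (x+2/3) = bernoulliFun 2 (x-1/3) := by
      rw [pb2_apply, show x+2/3 = (x-1/3) + ((1:ℤ):ℝ) by push_cast; ring,
        Int.fract_add_intCast, Int.fract_eq_self.2 ⟨by linarith [hx.1], by linarith [hx.2]⟩]
    rcases lt_or_eq_of_le hx.2 with hlt | hEq
    · have h13 : pb2 (x+1/3) = bernoulliFun 2 (x+1/3) := by
        rw [pb2_apply, Int.fract_eq_self.2 ⟨by linarith [hx.1], by linarith⟩]
      rw [ff, h13, h23, bern2, bern2, bern2]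
      ring
    · subst hEq
      have h13 : pb2 ((2:ℝ)/3+1/3) = bernoulliFun 2 0 := by
        rw [pb2_apply, show (2/3 : ℝ)+1/3 = 0 + ((1:ℤ):ℝ) by norm_num,
          Int.fract_add_intCast, Int.fract_zero]
      rw [ff, h13, h23, bern2, bern2, bern2]
      norm_num
  rw [intervalIntegral.integral_congr heq, int_poly]
  norm_num

lemma piece3 : ∫ x in (2/3:ℝ)..1, ff x = 53/918540 := by
  have heq : Set.EqOn ff (fun x : ℝ => (253/1944 : ℝ) + (-445/324)*x + (1717/324)*x^2
      + (-10)*x^3 + (179/18)*x^4 + (-5)*x^5 + 1*x^6) (Set.uIcc (2/3) 1) := by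
    intro x hx
    rw [Set.uIcc_of_le (by norm_num)] at hx
    have h23 : pb2 (x+2/3) = bernoulliFun 2 (x-1/3) := by
      rw [pb2_apply, show x+2/3 = (x-1/3) + ((1:ℤ):ℝ) by push_cast; ring,
        Int.fract_add_intCast, Int.fract_eq_self.2 ⟨by linarith [hx.1], by linarith [hx.2]⟩]
    have h13 : pb2 (x+1/3) = bernoulliFun 2 (x-2/3) := by
      rw [pb2_apply, show x+1/3 = (x-2/3) + ((1:ℤ):ℝ) by push_cast; ring,
        Int.fract_add_intCast, Int.fract_eq_self.2 ⟨by linarith [hx.1], by linarith [hx.2]⟩]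
    rw [ff, h13, h23, bern2, bern2, bern2]
    ring
  rw [intervalIntegral.integral_congr heq, int_poly]
  norm_num

lemma real_int : ∫ x in (0:ℝ)..1, ff x = 53/306180 := by
  have hi : ∀ a b : ℝ, IntervalIntegrable ff MeasureTheory.volume a b :=
    fun a b => ff_cont.intervalIntegrable a b
  rw [← intervalIntegral.integral_add_adjacent_intervals (a := (0:ℝ)) (b := 2/3) (c := 1)
      (hi _ _) (hi _ _),
    ← intervalIntegral.integral_add_adjacent_intervals (a := (0:ℝ)) (b := 1/3) (c := 2/3)
      (hi _ _) (hi _ _), piece1, piece2, piece3]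
  norm_num

/-! ### Final assembly -/

lemma final : ∑' p : ℕ × ℕ, sOrig p = 53 / 229635 * ((π:ℝ) : ℂ) ^ 6 := by
  have h1 : ∑' q : ℤ × ℤ, tt q = ((8 * (π:ℝ)^6 * (53/306180) : ℝ) : ℂ) := by
    rw [tsum_tt_eq]
    have h2 : ∀ x : ℝ, (∑' q : ℤ × ℤ, KK q x) = ((8 * (π:ℝ)^6 * ff x : ℝ) : ℂ) := by
      intro x
      rw [tsum_KK x, ff]
      push_cast
      ring
    rw [MeasureTheory.integral_congr_ae (MeasureTheory.ae_of_all _ (fun x => h2 x)),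
      ← intervalIntegral.integral_of_le zero_le_one, intervalIntegral.integral_ofReal]
    norm_cast
    rw [intervalIntegral.integral_const_mul, real_int]
  have h6 := lattice_eq
  rw [h1] at h6
  have h9 : ((8 * (π:ℝ)^6 * (53/306180) : ℝ):ℂ) = 6 * (53/229635 * ((π:ℝ):ℂ)^6) := by
    push_cast; ring
  exact mul_left_cancel₀ (by norm_num : (6:ℂ) ≠ 0) (h6.symm.trans h9)

end ZetaSU3

end ZetaSU3Aux

open Complex

/-- With ϱ = e^{2πi/3}, the sum over m,n ≥ 1 of ϱ^{2m+n}/(m²n²(m+n)²)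
equals (53/229635)π⁶.  (The value ζ₂((2,2,2), λ₁^∨; SU(3)).) -/
theorem zeta2_SU3_twisted_two_two_two :
    (∑' pr : ℕ × ℕ,
      Complex.exp (2 * Real.pi * Complex.I / 3) ^ (2 * (pr.1 + 1) + (pr.2 + 1))
        / (((pr.1 : ℂ) + 1) ^ 2 * ((pr.2 : ℂ) + 1) ^ 2
          * ((pr.1 : ℂ) + (pr.2 : ℂ) + 2) ^ 2))
    = 53 / 229635 * (Real.pi : ℂ) ^ 6 :=
  ZetaSU3.final
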